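/- With the setup of the previous statement (x, y non-adjacent, sharing k common neighbors, and a uniformly random permutation), the events 'x precedes all of N(x)' and 'y precedes all of N(y)' are independent if and only if k = 0, and are positively correlated if k > 0. -/

import Mathlib

open SimpleGraph Finset

lemma key {W : Type*} [Fintype W] [DecidableEq W] {m : ℕ} (v : W) (T : Finset W) (hv : v ∉ T)
    (Q : (W ≃ Fin m) → Prop)
    (hQ : ∀ w ∈ insert v T, ∀ π : W ≃ Fin m, Q π → Q ((Equiv.swap v w).trans π)) :
    Nat.card {π : W ≃ Fin m // Q π ∧ ∀ u ∈ T, π v < π u} * (T.card + 1)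
      = Nat.card {π : W ≃ Fin m // Q π} := by
  classical
  set S : Finset W := insert v T with hS
  have hvS : v ∈ S := mem_insert_self v T
  -- the argmin over S
  have hne : ∀ σ : W ≃ Fin m, ((S.image σ)).Nonempty :=
    fun σ => ⟨σ v, mem_image_of_mem _ hvS⟩
  set amin : (W ≃ Fin m) → W := fun σ => σ.symm ((S.image σ).min' (hne σ)) with hamin
  have haS : ∀ σ : W ≃ Fin m, amin σ ∈ S := by
    intro σ
    obtain ⟨u, hu, hu2⟩ := mem_image.mp (min'_mem (S.image σ) (hne σ))
    simpa [hamin, ← hu2] using hu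
  have hmin : ∀ σ : W ≃ Fin m, ∀ u ∈ S, σ (amin σ) ≤ σ u := by
    intro σ u hu
    have : σ (amin σ) = (S.image σ).min' (hne σ) := σ.apply_symm_apply _
    rw [this]
    exact min'_le _ _ (mem_image_of_mem _ hu)
  have e : ({π : W ≃ Fin m // Q π ∧ ∀ u ∈ T, π v < π u} × {w // w ∈ S}) ≃
      {π : W ≃ Fin m // Q π} :=
  { toFun := fun p => ⟨(Equiv.swap v p.2.1).trans p.1.1, hQ _ p.2.2 _ p.1.2.1⟩
    invFun := fun σ =>
      (⟨(Equiv.swap v (amin σ.1)).trans σ.1, hQ _ (haS σ.1) _ σ.2, by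
        intro u hu
        have huv : u ≠ v := fun h => hv (h ▸ hu)
        have hσ : ((Equiv.swap v (amin σ.1)).trans σ.1) v = σ.1 (amin σ.1) := by
          simp [Equiv.swap_apply_left]
        by_cases hua : u = amin σ.1
        · have hvamin : v ≠ amin σ.1 := fun h => huv (hua.trans h.symm)
          have : ((Equiv.swap v (amin σ.1)).trans σ.1) u = σ.1 v := by
            rw [Equiv.trans_apply, hua, Equiv.swap_apply_right]
          rw [this, hσ]
          exact lt_of_le_of_ne (hmin σ.1 v hvS) (fun h => hvamin (σ.1.injective h.symm))
        · have : ((Equiv.swap v (amin σ.1)).trans σ.1) u = σ.1 u := by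
            simp [Equiv.swap_apply_of_ne_of_ne huv hua]
          rw [this, hσ]
          exact lt_of_le_of_ne (hmin σ.1 u (mem_insert_of_mem hu))
            (fun h => hua (σ.1.injective h).symm)⟩,
       ⟨amin σ.1, haS σ.1⟩)
    left_inv := by
      rintro ⟨⟨π, hQπ, hA⟩, ⟨w, hw⟩⟩
      set σ : W ≃ Fin m := (Equiv.swap v w).trans π with hσdef
      -- the min of σ over S is attained at w, with value π v
      have hσw : σ w = π v := by simp [hσdef, Equiv.swap_apply_right]
      have hminσ : ∀ u ∈ S, σ w ≤ σ u := by
        intro u hu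
        rw [hσw]
        have : Equiv.swap v w u ∈ S := by
          rcases eq_or_ne u v with rfl | huv
          · simpa [Equiv.swap_apply_left] using hw
          · rcases eq_or_ne u w with rfl | huw
            · simpa [Equiv.swap_apply_right] using hvS
            · simpa [Equiv.swap_apply_of_ne_of_ne huv huw] using hu
        rcases mem_insert.mp this with h | h
        · rw [hσdef]; simp only [Equiv.trans_apply]; rw [h]
        · exact le_of_lt (hA _ h)
      have hav : amin σ = w := by
        have h1 : (S.image σ).min' (hne σ) = σ w := by
          apply le_antisymm
          · exact min'_le _ _ (mem_image_of_mem _ hw)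
          · apply le_min'
            intro b hb
            obtain ⟨u, hu, rfl⟩ := mem_image.mp hb
            exact hminσ u hu
        rw [hamin]; simp only; rw [h1, Equiv.symm_apply_apply]
      have hπ : (Equiv.swap v (amin σ)).trans σ = π := by
        rw [hav, hσdef]
        ext u
        simp [Equiv.swap_apply_self]
      exact Prod.ext (Subtype.ext hπ) (Subtype.ext hav)
    right_inv := by
      rintro ⟨σ, hQσ⟩
      apply Subtype.ext
      show (Equiv.swap v (amin σ)).trans ((Equiv.swap v (amin σ)).trans σ) = σ
      ext u
      simp [Equiv.swap_apply_self] }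
  have h1 : Nat.card ({π : W ≃ Fin m // Q π ∧ ∀ u ∈ T, π v < π u} × {w // w ∈ S})
      = Nat.card {π : W ≃ Fin m // Q π} := Nat.card_congr e
  rw [Nat.card_prod] at h1
  have h2 : Nat.card {w // w ∈ S} = T.card + 1 := by
    rw [Nat.card_eq_fintype_card, Fintype.card_coe, hS, card_insert_of_notMem hv]
  rw [h2] at h1
  exact h1

/-- The events "`x` precedes all its neighbors" and "`y` precedes all its neighbors"
under a uniform random permutation are independent iff `k = 0`, and positively
correlated if `k > 0`. -/
theorem stmt16 {V : Type*} [Fintype V] [DecidableEq V] (G : SimpleGraph V)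
    [DecidableRel G.Adj] (x y : V) (k l r : ℕ) (hxy : x ≠ y) (hadj : ¬ G.Adj x y)
    (hk : (G.neighborFinset x ∩ G.neighborFinset y).card = k)
    (hl : (G.neighborFinset x \ G.neighborFinset y).card = l)
    (hr : (G.neighborFinset y \ G.neighborFinset x).card = r)
    (hall : (univ : Finset V) = {x, y} ∪ G.neighborFinset x ∪ G.neighborFinset y) :
    (Nat.card {π : V ≃ Fin (Fintype.card V) //
          (∀ u ∈ G.neighborFinset x, π x < π u) ∧ (∀ u ∈ G.neighborFinset y, π y < π u)}
        * Nat.card (V ≃ Fin (Fintype.card V))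
      = Nat.card {π : V ≃ Fin (Fintype.card V) // ∀ u ∈ G.neighborFinset x, π x < π u}
        * Nat.card {π : V ≃ Fin (Fintype.card V) // ∀ u ∈ G.neighborFinset y, π y < π u}
      ↔ k = 0) ∧
    (0 < k →
      Nat.card {π : V ≃ Fin (Fintype.card V) // ∀ u ∈ G.neighborFinset x, π x < π u}
        * Nat.card {π : V ≃ Fin (Fintype.card V) // ∀ u ∈ G.neighborFinset y, π y < π u}
      < Nat.card {π : V ≃ Fin (Fintype.card V) //
          (∀ u ∈ G.neighborFinset x, π x < π u) ∧ (∀ u ∈ G.neighborFinset y, π y < π u)}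
        * Nat.card (V ≃ Fin (Fintype.card V))) := by
  classical
  set n := Fintype.card V with hndef
  set Nx := G.neighborFinset x with hNx
  set Ny := G.neighborFinset y with hNy
  have hxNx : x ∉ Nx := by simp [hNx]
  have hyNy : y ∉ Ny := by simp [hNy]
  have hxNy : x ∉ Ny := by
    simp only [hNy, mem_neighborFinset]
    exact fun h => hadj h.symm
  have hyNx : y ∉ Nx := by
    simp only [hNx, mem_neighborFinset]
    exact hadj
  -- degrees
  have hdx : Nx.card = k + l := by rw [← hk, ← hl, card_inter_add_card_sdiff]
  have hdy : Ny.card = k + r := by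
    have h := card_inter_add_card_sdiff Ny Nx
    rw [inter_comm] at h
    omega
  -- total size
  have hn : n = k + l + r + 2 := by
    have hcard2 : ({x, y} : Finset V).card = 2 := by
      rw [card_insert_of_notMem (by simp [hxy]), card_singleton]
    have hU : (Nx ∪ Ny).card = k + l + r := by
      have := card_union_add_card_inter Nx Ny
      omega
    have hdisj : Disjoint ({x, y} : Finset V) (Nx ∪ Ny) := by
      simp only [Finset.disjoint_left, mem_insert, mem_singleton, mem_union]
      rintro a (rfl | rfl) h
      · exact h.elim (fun h => hxNx h) (fun h => hxNy h)
      · exact h.elim (fun h => hyNx h) (fun h => hyNy h)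
    have : (univ : Finset V).card = ({x, y} ∪ (Nx ∪ Ny) : Finset V).card := by
      rw [hall, union_assoc]
    rw [card_univ, card_union_of_disjoint hdisj, hcard2, hU] at this
    omega
  have hnpos : 0 < n := by omega
  -- predicates
  set A : (V ≃ Fin n) → Prop := fun π => ∀ u ∈ Nx, π x < π u with hA
  set B : (V ≃ Fin n) → Prop := fun π => ∀ u ∈ Ny, π y < π u with hB
  set X : (V ≃ Fin n) → Prop := fun π => ∀ u ∈ univ \ {x}, π x < π u with hX
  set Y : (V ≃ Fin n) → Prop := fun π => ∀ u ∈ univ \ {y}, π y < π u with hY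
  set E := Nat.card (V ≃ Fin n) with hE
  haveI : Nonempty (V ≃ Fin n) := ⟨Fintype.equivFin V⟩
  have hEpos : 0 < E := by
    rw [hE]
    exact Nat.card_pos (α := V ≃ Fin n)
  -- simple instance of the key lemma (Q = True)
  have key' : ∀ (v : V) (T : Finset V), v ∉ T →
      Nat.card {π : V ≃ Fin n // ∀ u ∈ T, π v < π u} * (T.card + 1) = E := by
    intro v T hv
    have h := key (m := n) v T hv (fun _ => True) (fun _ _ _ _ => trivial)
    have h1 : Nat.card {π : V ≃ Fin n // (fun _ => True) π ∧ ∀ u ∈ T, π v < π u}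
        = Nat.card {π : V ≃ Fin n // ∀ u ∈ T, π v < π u} :=
      Nat.card_congr (Equiv.subtypeEquivRight (fun π => by simp))
    have h2 : Nat.card {π : V ≃ Fin n // (fun _ => True) π}
        = Nat.card (V ≃ Fin n) :=
      Nat.card_congr (Equiv.subtypeUnivEquiv (fun _ => trivial))
    rw [h1, h2] at h
    exact h
  have e1 : Nat.card {π : V ≃ Fin n // A π} * (k + l + 1) = E := by
    have := key' x Nx hxNx
    rwa [hdx] at this
  have e2 : Nat.card {π : V ≃ Fin n // B π} * (k + r + 1) = E := by
    have := key' y Ny hyNy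
    rwa [hdy] at this
  -- counts with a global minimum condition
  have hcardsdiff : ∀ v : V, ((univ : Finset V) \ {v}).card + 1 = n := by
    intro v
    rw [card_sdiff, card_univ, inter_eq_left.mpr (subset_univ _), card_singleton]
    omega
  have e3 : Nat.card {π : V ≃ Fin n // X π} * n = E := by
    have := key' x (univ \ {x}) (by simp)
    rwa [hcardsdiff x] at this
  have e4 : Nat.card {π : V ≃ Fin n // Y π} * n = E := by
    have := key' y (univ \ {y}) (by simp)
    rwa [hcardsdiff y] at this
  -- invariance of the global-min condition under swaps avoiding the min vertex
  have swapinv : ∀ (v w a : V), a ≠ v → a ≠ w →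
      ∀ π : V ≃ Fin n, (∀ u ∈ univ \ {a}, π a < π u) →
        (∀ u ∈ univ \ {a}, ((Equiv.swap v w).trans π) a < ((Equiv.swap v w).trans π) u) := by
    intro v w a hav haw π hπ u hu
    have hu' : u ≠ a := by simpa using hu
    have hswa : Equiv.swap v w a = a := Equiv.swap_apply_of_ne_of_ne hav haw
    simp only [Equiv.trans_apply, hswa]
    apply hπ
    simp only [mem_sdiff, mem_univ, mem_singleton, true_and]
    intro h
    exact hu' (by simpa [hswa] using (Equiv.swap v w).injective (h.trans hswa.symm))
  have e5 : Nat.card {π : V ≃ Fin n // X π ∧ B π} * (k + r + 1)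
      = Nat.card {π : V ≃ Fin n // X π} := by
    have h := key y Ny hyNy X ?hinv
    · rwa [hdy] at h
    case hinv =>
      intro w hw π hXπ
      have hwx : x ≠ w := by
        rcases mem_insert.mp hw with rfl | h
        · exact hxy
        · exact fun hh => hxNy (hh ▸ h)
      exact swapinv y w x hxy hwx π hXπ
  have e6 : Nat.card {π : V ≃ Fin n // A π ∧ Y π}
      = Nat.card {π : V ≃ Fin n // Y π ∧ A π} :=
    Nat.card_congr (Equiv.subtypeEquivRight (fun π => and_comm))
  have e6' : Nat.card {π : V ≃ Fin n // Y π ∧ A π} * (k + l + 1)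
      = Nat.card {π : V ≃ Fin n // Y π} := by
    have h := key x Nx hxNx Y ?hinv
    · rwa [hdx] at h
    case hinv =>
      intro w hw π hYπ
      have hwy : y ≠ w := by
        rcases mem_insert.mp hw with rfl | h
        · exact hxy.symm
        · exact fun hh => hyNx (hh ▸ h)
      exact swapinv x w y hxy.symm hwy π hYπ
  -- split A ∧ B according to whether x or y is the global minimum
  have hsplit : Nat.card {π : V ≃ Fin n // A π ∧ B π}
      = Nat.card {π : V ≃ Fin n // X π ∧ B π} + Nat.card {π : V ≃ Fin n // A π ∧ Y π} := by
    have hXlt : ∀ π : V ≃ Fin n, X π → π x < π y := by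
      intro π hXπ
      exact hXπ y (by simp [Ne.symm hxy])
    have hYlt : ∀ π : V ≃ Fin n, Y π → π y < π x := by
      intro π hYπ
      exact hYπ x (by simp [hxy])
    have hiff : ∀ π : V ≃ Fin n, (A π ∧ B π) ↔ ((X π ∧ B π) ∨ (A π ∧ Y π)) := by
      intro π
      constructor
      · rintro ⟨hAπ, hBπ⟩
        rcases lt_trichotomy (π x) (π y) with hlt | heq | hgt
        · left
          refine ⟨?_, hBπ⟩
          intro u hu
          have hux : u ≠ x := by simpa using hu
          have humem : u ∈ ({x, y} ∪ Nx ∪ Ny : Finset V) := hall ▸ mem_univ u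
          simp only [mem_union, mem_insert, mem_singleton] at humem
          rcases humem with ((rfl | rfl) | h) | h
          · exact absurd rfl hux
          · exact hlt
          · exact hAπ u h
          · exact hlt.trans (hBπ u h)
        · exact absurd (π.injective heq) hxy
        · right
          refine ⟨hAπ, ?_⟩
          intro u hu
          have huy : u ≠ y := by simpa using hu
          have humem : u ∈ ({x, y} ∪ Nx ∪ Ny : Finset V) := hall ▸ mem_univ u
          simp only [mem_union, mem_insert, mem_singleton] at humem
          rcases humem with ((rfl | rfl) | h) | h
          · exact hgt
          · exact absurd rfl huy
          · exact hgt.trans (hAπ u h)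
          · exact hBπ u h
      · rintro (⟨hXπ, hBπ⟩ | ⟨hAπ, hYπ⟩)
        · refine ⟨?_, hBπ⟩
          intro u hu
          apply hXπ
          simp only [mem_sdiff, mem_univ, mem_singleton, true_and]
          intro hh
          exact hxNx (hh ▸ hu)
        · refine ⟨hAπ, ?_⟩
          intro u hu
          apply hYπ
          simp only [mem_sdiff, mem_univ, mem_singleton, true_and]
          intro hh
          exact hyNy (hh ▸ hu)
    have hdisj : Disjoint (fun π : V ≃ Fin n => X π ∧ B π) (fun π => A π ∧ Y π) := by
      rw [Pi.disjoint_iff]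
      intro π
      rw [Prop.disjoint_iff]
      rintro ⟨⟨hXπ, _⟩, ⟨_, hYπ⟩⟩
      exact absurd (hXlt π hXπ) (not_lt.mpr (le_of_lt (hYlt π hYπ)))
    calc Nat.card {π : V ≃ Fin n // A π ∧ B π}
        = Nat.card {π : V ≃ Fin n // (X π ∧ B π) ∨ (A π ∧ Y π)} :=
          Nat.card_congr (Equiv.subtypeEquivRight hiff)
      _ = Nat.card ({π : V ≃ Fin n // X π ∧ B π} ⊕ {π : V ≃ Fin n // A π ∧ Y π}) :=
          Nat.card_congr (subtypeOrEquiv _ _ hdisj)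
      _ = _ := Nat.card_sum
  -- final arithmetic
  have bAB : Nat.card {π : V ≃ Fin n // (∀ u ∈ Nx, π x < π u) ∧ (∀ u ∈ Ny, π y < π u)}
      = Nat.card {π : V ≃ Fin n // A π ∧ B π} := rfl
  have bA : Nat.card (Subtype A) = Nat.card {π : V ≃ Fin n // A π} := rfl
  have bB : Nat.card (Subtype B) = Nat.card {π : V ≃ Fin n // B π} := rfl
  rw [bAB, bA, bB]
  set NA := Nat.card {π : V ≃ Fin n // A π} with hNA
  set NB := Nat.card {π : V ≃ Fin n // B π} with hNB
  set NAB := Nat.card {π : V ≃ Fin n // A π ∧ B π} with hNAB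
  set DX := Nat.card {π : V ≃ Fin n // X π ∧ B π} with hDX
  set DY := Nat.card {π : V ≃ Fin n // A π ∧ Y π} with hDY
  set NX := Nat.card {π : V ≃ Fin n // X π} with hNXc
  set NYc := Nat.card {π : V ≃ Fin n // Y π} with hNYc
  set P := (k + l + 1) * (k + r + 1) * n with hP
  have hPpos : 0 < P := by positivity
  have hP1 : NAB * E * P = E * E * (n + k) := by
    calc NAB * E * P
        = (DX * (k + r + 1)) * n * (k + l + 1) * E
          + ((Nat.card {π : V ≃ Fin n // Y π ∧ A π}) * (k + l + 1)) * n * (k + r + 1) * E := by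
          rw [hsplit, ← e6]; ring
      _ = NX * n * (k + l + 1) * E + NYc * n * (k + r + 1) * E := by rw [e5, e6']
      _ = E * (k + l + 1) * E + E * (k + r + 1) * E := by rw [e3, e4]
      _ = E * E * (n + k) := by rw [hn]; ring
  have hP2 : NA * NB * P = E * E * n := by
    calc NA * NB * P = (NA * (k + l + 1)) * (NB * (k + r + 1)) * n := by ring
      _ = E * E * n := by rw [e1, e2]
  refine ⟨⟨fun h => ?_, fun h => ?_⟩, fun hkpos => ?_⟩
  · have h' : E * E * (n + k) = E * E * n := by rw [← hP1, ← hP2, h]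
    have := Nat.eq_of_mul_eq_mul_left (by positivity : 0 < E * E) h'
    omega
  · have hPE : NAB * E * P = NA * NB * P := by rw [hP1, hP2, h, add_zero]
    exact Nat.eq_of_mul_eq_mul_right hPpos hPE
  · have hlt : E * E * n < E * E * (n + k) := by
      have h0 : 0 < E * E := by positivity
      exact mul_lt_mul_of_pos_left (by omega) h0
    have h2 : NA * NB * P < NAB * E * P := by rw [hP1, hP2]; exact hlt
    exact lt_of_mul_lt_mul_right h2 (Nat.zero_le P)
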